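/- Let ρ be a unitary matrix representation of a finite group G of dimension n. For a nonempty finite subset T ⊆ G define the partial averaging operator Σ_{ρ,T}[X] = (1/|T|) Σ_{t ∈ T} ρ_t X (ρ_t)⁻¹ on n×n complex matrices. Suppose T_1, …, T_ν are nonempty subsets of G such that every g ∈ G has a unique decomposition g = t_ν ⋯ t_1 with t_i ∈ T_i (i.e. the product map T_ν × ⋯ × T_1 → G, (t_ν, …, t_1) ↦ t_ν ⋯ t_1, is a bijection). Then for every n×n complex matrix X, Σ_{ρ,T_ν}[Σ_{ρ,T_{ν−1}}[⋯ Σ_{ρ,T_1}[X]]] = (1/|G|) Σ_{g ∈ G} ρ_g X (ρ_g)⁻¹. -/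

import Mathlib

open Matrix

theorem sum_piFinset_cons' {G : Type*} [DecidableEq G] {M : Type*} [AddCommMonoid M]
    (ν : ℕ) (s : Fin (ν+1) → Finset G) (f : (Fin (ν+1) → G) → M) :
    ∑ t ∈ Fintype.piFinset s, f t
      = ∑ x ∈ s 0, ∑ t' ∈ Fintype.piFinset (Fin.tail s), f (Fin.cons x t') := by
  rw [← Finset.sum_product']
  refine Finset.sum_nbij' (fun t => (t 0, Fin.tail t)) (fun p => Fin.cons p.1 p.2) ?_ ?_ ?_ ?_ ?_
  · intro t ht
    rw [Fin.mem_piFinset_iff_zero_tail] at ht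
    exact Finset.mk_mem_product ht.1 ht.2
  · rintro ⟨x, t'⟩ h
    simp only [Finset.mem_product] at h
    rw [Fin.mem_piFinset_iff_zero_tail]
    simpa using h
  · intro t ht; exact Fin.cons_self_tail t
  · rintro ⟨x,t'⟩ h; simp
  · intro t ht; rw [Fin.cons_self_tail]

theorem conj_mul' {G : Type*} [Group G] {n : ℕ}
    (ρ : G →* Matrix.unitaryGroup (Fin n) ℂ) (g h : G) (X : Matrix (Fin n) (Fin n) ℂ) :
    (ρ g : Matrix (Fin n) (Fin n) ℂ) *
        ((ρ h : Matrix (Fin n) (Fin n) ℂ) * X * ((ρ h)⁻¹ : Matrix (Fin n) (Fin n) ℂ)) *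
        ((ρ g)⁻¹ : Matrix (Fin n) (Fin n) ℂ)
      = (ρ (g*h) : Matrix (Fin n) (Fin n) ℂ) * X * ((ρ (g*h))⁻¹ : Matrix (Fin n) (Fin n) ℂ) := by
  simp [_root_.map_mul, Matrix.mul_inv_rev, mul_assoc]

theorem aux_foldl {G : Type*} [Group G] [DecidableEq G] {n : ℕ}
    (ρ : G →* Matrix.unitaryGroup (Fin n) ℂ)
    (pavg : Finset G → Matrix (Fin n) (Fin n) ℂ → Matrix (Fin n) (Fin n) ℂ)
    (hpavg : ∀ (S : Finset G) (X : Matrix (Fin n) (Fin n) ℂ),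
      pavg S X = (S.card : ℂ)⁻¹ •
        ∑ t ∈ S, (ρ t : Matrix (Fin n) (Fin n) ℂ) * X * ((ρ t)⁻¹ : Matrix (Fin n) (Fin n) ℂ)) :
    ∀ (ν : ℕ) (T : Fin ν → Finset G) (X : Matrix (Fin n) (Fin n) ℂ),
    (List.finRange ν).foldl (fun Y i => pavg (T i) Y) X
      = (∏ i, ((T i).card : ℂ))⁻¹ •
        ∑ t ∈ Fintype.piFinset T,
          (ρ ((List.ofFn fun i => t i.rev).prod) : Matrix (Fin n) (Fin n) ℂ) * X *
            ((ρ ((List.ofFn fun i => t i.rev).prod))⁻¹ : Matrix (Fin n) (Fin n) ℂ) := by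
  intro ν
  induction ν with
  | zero =>
    intro T X
    simp
  | succ ν ih =>
    intro T X
    have hlist : ∀ (t : Fin (ν+1) → G),
        (List.ofFn fun i : Fin (ν+1) => t i.rev).prod
          = (List.ofFn fun i : Fin ν => (Fin.tail t) i.rev).prod * t 0 := by
      intro t
      rw [List.ofFn_succ']
      simp [Fin.rev_castSucc, Fin.tail, List.concat_eq_append]
    rw [List.finRange_succ, List.foldl_cons, List.foldl_map]
    have h1 : List.foldl (fun x (y : Fin ν) => pavg (T y.succ) x) (pavg (T 0) X)
        (List.finRange ν) = _ := ih (Fin.tail T) (pavg (T 0) X)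
    rw [h1]
    rw [hpavg (T 0) X]
    rw [sum_piFinset_cons']
    rw [Fin.prod_univ_succ]
    have key : ∀ t' ∈ Fintype.piFinset (Fin.tail T),
        (ρ ((List.ofFn fun i => t' i.rev).prod) : Matrix (Fin n) (Fin n) ℂ) *
          (((T 0).card : ℂ)⁻¹ • ∑ x ∈ T 0,
            (ρ x : Matrix (Fin n) (Fin n) ℂ) * X * ((ρ x)⁻¹ : Matrix (Fin n) (Fin n) ℂ)) *
          ((ρ ((List.ofFn fun i => t' i.rev).prod))⁻¹ : Matrix (Fin n) (Fin n) ℂ)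
        = ((T 0).card : ℂ)⁻¹ • ∑ x ∈ T 0,
            (ρ ((List.ofFn fun i => t' i.rev).prod * x) : Matrix (Fin n) (Fin n) ℂ) * X *
              ((ρ ((List.ofFn fun i => t' i.rev).prod * x))⁻¹ : Matrix (Fin n) (Fin n) ℂ) := by
      intro t' _
      rw [Matrix.mul_smul, Matrix.smul_mul, Finset.mul_sum, Finset.sum_mul]
      congr 1
      exact Finset.sum_congr rfl fun x _ => conj_mul' ρ _ x X
    rw [Finset.sum_congr rfl key, ← Finset.smul_sum, smul_smul]
    rw [mul_inv, mul_comm]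
    congr 1
    rw [Finset.sum_comm]
    refine Finset.sum_congr rfl fun x hx => Finset.sum_congr rfl fun t' ht' => ?_
    rw [hlist (Fin.cons x t')]
    simp [Fin.tail_cons]

/-- for a unitary representation `ρ` of a finite group `G` and nonempty subsets
`T 0, …, T (ν-1)` of `G` (representing `T_1, …, T_ν`) such that the product map
`(t_ν, …, t_1) ↦ t_ν ⋯ t_1` is a bijection onto `G`, the composition of the partial averaging
operators `Σ_{ρ,T}[X] = (1/|T|) ∑_{t ∈ T} ρ t * X * (ρ t)⁻¹` (innermost `T_1`, outermost `T_ν`)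
equals the full group average `(1/|G|) ∑ g, ρ g * X * (ρ g)⁻¹`. -/
theorem iterated_partial_average_eq_group_average
    {G : Type*} [Group G] [Fintype G] {n ν : ℕ}
    (ρ : G →* Matrix.unitaryGroup (Fin n) ℂ)
    (T : Fin ν → Finset G)
    (hT : ∀ i, (T i).Nonempty)
    (pavg : Finset G → Matrix (Fin n) (Fin n) ℂ → Matrix (Fin n) (Fin n) ℂ)
    (hpavg : ∀ (S : Finset G) (X : Matrix (Fin n) (Fin n) ℂ),
      pavg S X = (S.card : ℂ)⁻¹ •
        ∑ t ∈ S, (ρ t : Matrix (Fin n) (Fin n) ℂ) * X * ((ρ t)⁻¹ : Matrix (Fin n) (Fin n) ℂ))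
    (hbij : Function.Bijective
      (fun t : {t : Fin ν → G // ∀ i, t i ∈ T i} =>
        (List.ofFn fun i : Fin ν => t.1 i.rev).prod))
    (X : Matrix (Fin n) (Fin n) ℂ) :
    (List.finRange ν).foldl (fun Y i => pavg (T i) Y) X
      = (Fintype.card G : ℂ)⁻¹ •
        ∑ g : G, (ρ g : Matrix (Fin n) (Fin n) ℂ) * X * ((ρ g)⁻¹ : Matrix (Fin n) (Fin n) ℂ) := by
  classical
  rw [aux_foldl ρ pavg hpavg ν T X]
  have hsum : ∑ t ∈ Fintype.piFinset T,
      (ρ ((List.ofFn fun i => t i.rev).prod) : Matrix (Fin n) (Fin n) ℂ) * X *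
        ((ρ ((List.ofFn fun i => t i.rev).prod))⁻¹ : Matrix (Fin n) (Fin n) ℂ)
      = ∑ g : G, (ρ g : Matrix (Fin n) (Fin n) ℂ) * X *
          ((ρ g)⁻¹ : Matrix (Fin n) (Fin n) ℂ) := by
    rw [Finset.sum_subtype (Fintype.piFinset T)
      (fun t => (Fintype.mem_piFinset : t ∈ _ ↔ ∀ i, t i ∈ T i))]
    exact (Equiv.ofBijective _ hbij).sum_comp
      (fun g => (ρ g : Matrix (Fin n) (Fin n) ℂ) * X * ((ρ g)⁻¹ : Matrix (Fin n) (Fin n) ℂ))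
  rw [hsum]
  congr 2
  have hcard : Fintype.card G = ∏ i, (T i).card := by
    rw [← Fintype.card_of_bijective hbij, ← Fintype.card_piFinset]
    rw [Fintype.card_subtype]
    congr 1
    ext t
    simp [Fintype.mem_piFinset]
  rw [hcard]
  push_cast
  ring
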